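/- Let a ≥ 1 be a real number, let n ≥ 4a be an integer, let f: {0,1}^n → [0,1] be an a-self-bounding function, and let ε ∈ (0,1]. Set d = ⌈(4a/ε)·ln(6/ε)⌉ and α = 3^{−2d−1}·ε⁴/a². Then there exists a polynomial p = Σ_{S⊆[n], |S|≤d} p̂(S) χ_S of degree at most d such that ‖f − p‖_1 ≤ ε and the spectral norm satisfies ‖p̂‖_1 = Σ_{S⊆[n]} |p̂(S)| ≤ (1 + a/α)^d. -/

import Mathlib

set_option maxHeartbeats 1000000

noncomputable section

def SelfBounding (n : ℕ) (a : ℝ) (f : (Fin n → Bool) → ℝ) : Prop :=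
  ∀ x : Fin n → Bool,
    (∀ i : Fin n,
      f x - min (f (Function.update x i false)) (f (Function.update x i true)) ≤ 1) ∧
    ∑ i : Fin n,
      (f x - min (f (Function.update x i false)) (f (Function.update x i true))) ≤ a * f x

def expect (n : ℕ) (g : (Fin n → Bool) → ℝ) : ℝ :=
  (∑ x : Fin n → Bool, g x) / 2 ^ n

def parity (n : ℕ) (S : Finset (Fin n)) (x : Fin n → Bool) : ℝ :=
  (-1 : ℝ) ^ (S.filter (fun i => x i = true)).card

namespace SB

variable {n : ℕ}

def ee (b : Bool) : ℝ := if b then -1 else 1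

lemma parity_eq_prod (S : Finset (Fin n)) (x : Fin n → Bool) :
    parity n S x = ∏ i ∈ S, ee (x i) := by
  rw [parity, ← Finset.prod_filter_mul_prod_filter_not S (fun i => x i = true) (fun i => ee (x i))]
  have h1 : ∏ i ∈ S.filter (fun i => x i = true), ee (x i) =
      (-1 : ℝ) ^ (S.filter (fun i => x i = true)).card := by
    rw [← Finset.prod_const]
    exact Finset.prod_congr rfl (fun i hi => by simp [ee, (Finset.mem_filter.1 hi).2])
  have h2 : ∏ i ∈ S.filter (fun i => ¬ x i = true), ee (x i) = 1 := by
    apply Finset.prod_eq_one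
    intro i hi
    have := (Finset.mem_filter.1 hi).2
    simp [ee, Bool.not_eq_true] at this ⊢
    simp [this]
  rw [h1, h2, mul_one]

lemma ee_mul_self (b : Bool) : ee b * ee b = 1 := by cases b <;> simp [ee]

lemma ee_one_or (b : Bool) : ee b = 1 ∨ ee b = -1 := by cases b <;> simp [ee]

lemma parity_one_or (S : Finset (Fin n)) (x : Fin n → Bool) :
    parity n S x = 1 ∨ parity n S x = -1 := by
  rcases Nat.even_or_odd (S.filter (fun i => x i = true)).card with h | h
  · left; rw [parity]; exact h.neg_one_pow
  · right; rw [parity]; exact h.neg_one_pow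

lemma parity_mul_self (S : Finset (Fin n)) (x : Fin n → Bool) :
    parity n S x * parity n S x = 1 := by
  rcases parity_one_or S x with h | h <;> rw [h] <;> norm_num

lemma abs_parity (S : Finset (Fin n)) (x : Fin n → Bool) : |parity n S x| = 1 := by
  rcases parity_one_or S x with h | h <;> rw [h] <;> norm_num

/-- orthogonality -/
lemma sum_parity_mul (S T : Finset (Fin n)) :
    ∑ x : Fin n → Bool, parity n S x * parity n T x = if S = T then (2 : ℝ) ^ n else 0 := by
  have key : ∀ x : Fin n → Bool, parity n S x * parity n T x =
      ∏ i, ((if i ∈ S then ee (x i) else 1) * (if i ∈ T then ee (x i) else 1)) := by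
    intro x
    rw [parity_eq_prod, parity_eq_prod, Finset.prod_mul_distrib,
      Finset.prod_ite_mem Finset.univ S (fun i => ee (x i)),
      Finset.prod_ite_mem Finset.univ T (fun i => ee (x i)), Finset.univ_inter,
      Finset.univ_inter]
  calc ∑ x : Fin n → Bool, parity n S x * parity n T x
      = ∑ x : Fin n → Bool, ∏ i,
        ((if i ∈ S then ee (x i) else 1) * (if i ∈ T then ee (x i) else 1)) :=
        Finset.sum_congr rfl (fun x _ => key x)
    _ = ∏ i : Fin n, ∑ b : Bool, ((if i ∈ S then ee b else 1) * (if i ∈ T then ee b else 1)) :=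
        (Fintype.prod_sum (fun (i : Fin n) (b : Bool) => (if i ∈ S then ee b else 1) * (if i ∈ T then ee b else 1))).symm
    _ = if S = T then (2 : ℝ) ^ n else 0 := by
        by_cases hST : S = T
        · subst hST
          simp only [if_pos rfl]
          rw [Finset.prod_congr rfl (fun i _ => ?_), Finset.prod_const, Finset.card_univ,
            Fintype.card_fin]
          · rfl
          · by_cases hi : i ∈ S <;> simp [hi, ee] <;> norm_num
        · rw [if_neg hST]
          have : ∃ i, (i ∈ S) ≠ (i ∈ T) := by
            by_contra hc
            push_neg at hc
            exact hST (Finset.ext fun i => by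
              constructor <;> intro h <;> [exact (hc i) ▸ h; exact (hc i).symm ▸ h])
          obtain ⟨i, hi⟩ := this
          apply Finset.prod_eq_zero (Finset.mem_univ i)
          have hsum : ∑ b : Bool, ee b = 0 := by simp [ee]
          by_cases h1 : i ∈ S <;> by_cases h2 : i ∈ T <;>
            simp_all [ee]


/-! ### expect API -/

lemma expect_nonneg {g : (Fin n → Bool) → ℝ} (h : ∀ x, 0 ≤ g x) : 0 ≤ expect n g :=
  div_nonneg (Finset.sum_nonneg fun x _ => h x) (by positivity)

lemma expect_mono {g h : (Fin n → Bool) → ℝ} (hh : ∀ x, g x ≤ h x) :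
    expect n g ≤ expect n h :=
  div_le_div_of_nonneg_right (Finset.sum_le_sum fun x _ => hh x) (by positivity) |>.trans_eq rfl

lemma expect_const (c : ℝ) : expect n (fun _ => c) = c := by
  rw [expect, Finset.sum_const, Finset.card_univ, Fintype.card_fun, Fintype.card_bool,
    Fintype.card_fin, nsmul_eq_mul]
  push_cast
  field_simp

lemma expect_add (g h : (Fin n → Bool) → ℝ) :
    expect n (fun x => g x + h x) = expect n g + expect n h := by
  rw [expect, expect, expect, Finset.sum_add_distrib, add_div]

lemma expect_sub (g h : (Fin n → Bool) → ℝ) :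
    expect n (fun x => g x - h x) = expect n g - expect n h := by
  rw [expect, expect, expect, Finset.sum_sub_distrib, sub_div]

lemma expect_smul (c : ℝ) (g : (Fin n → Bool) → ℝ) :
    expect n (fun x => c * g x) = c * expect n g := by
  rw [expect, expect, ← Finset.mul_sum, mul_div_assoc]

lemma expect_sum {ι : Type*} (𝒮 : Finset ι) (F : ι → (Fin n → Bool) → ℝ) :
    expect n (fun x => ∑ S ∈ 𝒮, F S x) = ∑ S ∈ 𝒮, expect n (F S) := by
  rw [expect, Finset.sum_comm, Finset.sum_div]
  rfl

lemma abs_expect_le (g : (Fin n → Bool) → ℝ) : |expect n g| ≤ expect n (fun x => |g x|) := by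
  rw [expect, expect, abs_div, abs_of_nonneg (by positivity : (0:ℝ) ≤ (2:ℝ)^n)]
  exact div_le_div_of_nonneg_right (Finset.abs_sum_le_sum_abs _ _) (by positivity)

/-- Cauchy-Schwarz for expect. -/
lemma expect_cs (u v : (Fin n → Bool) → ℝ) :
    (expect n (fun x => u x * v x)) ^ 2 ≤
      expect n (fun x => u x ^ 2) * expect n (fun x => v x ^ 2) := by
  rw [expect, expect, expect, div_pow, div_mul_div_comm, ← pow_mul, ← pow_add]
  have h2 : ((2:ℝ) ^ (n * 2)) = 2 ^ (n + n) := by ring_nf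
  rw [h2]
  apply div_le_div_of_nonneg_right _ (by positivity)
  exact Finset.sum_mul_sq_le_sq_mul_sq Finset.univ u v

lemma expect_abs_le_sqrt (g : (Fin n → Bool) → ℝ) :
    expect n (fun x => |g x|) ≤ Real.sqrt (expect n (fun x => g x ^ 2)) := by
  have h := expect_cs (fun x => |g x|) (fun _ => 1)
  simp only [mul_one, one_pow, sq_abs] at h
  rw [expect_const, mul_one] at h
  have h0 : 0 ≤ expect n (fun x => |g x|) := expect_nonneg fun x => abs_nonneg _
  calc expect n (fun x => |g x|) = Real.sqrt ((expect n fun x => |g x|) ^ 2) :=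
        (Real.sqrt_sq h0).symm
    _ ≤ _ := Real.sqrt_le_sqrt (by simpa using h)

/-! ### Fourier coefficients -/

def fhat (f : (Fin n → Bool) → ℝ) (S : Finset (Fin n)) : ℝ :=
  expect n (fun x => f x * parity n S x)

lemma expect_parity_mul (S T : Finset (Fin n)) :
    expect n (fun x => parity n S x * parity n T x) = if S = T then 1 else 0 := by
  rw [expect, sum_parity_mul]
  by_cases h : S = T <;> simp [h]

/-- point mass identity -/
lemma sum_parity_point (x y : Fin n → Bool) :
    ∑ S : Finset (Fin n), parity n S x * parity n S y = if x = y then (2 : ℝ) ^ n else 0 := by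
  have key : ∀ S : Finset (Fin n), parity n S x * parity n S y =
      ∏ i ∈ S, (ee (x i) * ee (y i)) := by
    intro S
    rw [parity_eq_prod, parity_eq_prod, Finset.prod_mul_distrib]
  calc ∑ S : Finset (Fin n), parity n S x * parity n S y
      = ∑ S : Finset (Fin n), ∏ i ∈ S, (ee (x i) * ee (y i)) :=
        Finset.sum_congr rfl fun S _ => key S
    _ = ∑ S : Finset (Fin n), (∏ i ∈ S, (ee (x i) * ee (y i))) * ∏ i ∈ Sᶜ, 1 := by
        simp
    _ = ∏ i : Fin n, (ee (x i) * ee (y i) + 1) := (Fintype.prod_add _ _).symm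
    _ = if x = y then (2 : ℝ) ^ n else 0 := by
        by_cases hxy : x = y
        · subst hxy
          rw [if_pos rfl]
          rw [Finset.prod_congr rfl (fun i _ => by rw [ee_mul_self]), Finset.prod_const]
          norm_num [Finset.card_univ]
        · rw [if_neg hxy]
          have : ∃ i, x i ≠ y i := by
            by_contra hc; push_neg at hc; exact hxy (funext hc)
          obtain ⟨i, hi⟩ := this
          apply Finset.prod_eq_zero (Finset.mem_univ i)
          rcases Bool.eq_false_or_eq_true (x i) with h1 | h1 <;>
            rcases Bool.eq_false_or_eq_true (y i) with h2 | h2 <;>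
              simp_all [ee]

/-- Fourier inversion -/
lemma inversion (f : (Fin n → Bool) → ℝ) (x : Fin n → Bool) :
    ∑ S : Finset (Fin n), fhat f S * parity n S x = f x := by
  have : ∀ S : Finset (Fin n), fhat f S * parity n S x =
      expect n (fun y => f y * (parity n S y * parity n S x)) := by
    intro S
    rw [fhat, mul_comm, ← expect_smul]
    congr 1 with y
    ring
  rw [Finset.sum_congr rfl fun S _ => this S, ← expect_sum]
  have : ∀ y : Fin n → Bool, (∑ S : Finset (Fin n), f y * (parity n S y * parity n S x))
      = f y * ∑ S : Finset (Fin n), parity n S y * parity n S x := by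
    intro y; rw [Finset.mul_sum]
  rw [show (fun y => ∑ S : Finset (Fin n), f y * (parity n S y * parity n S x)) =
    (fun y => f y * ∑ S : Finset (Fin n), parity n S y * parity n S x) from funext this]
  rw [expect]
  rw [Finset.sum_eq_single x]
  · rw [sum_parity_point, if_pos rfl]
    field_simp
  · intro y _ hy
    rw [sum_parity_point, if_neg hy]
    ring
  · intro h; exact absurd (Finset.mem_univ x) h

/-- `E[f ⬝ Σ_{S ∈ 𝒮} c S χ_S] = Σ_{S ∈ 𝒮} c S * fhat S` -/
lemma expect_mul_coeffsum (f : (Fin n → Bool) → ℝ) (𝒮 : Finset (Finset (Fin n)))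
    (c : Finset (Fin n) → ℝ) :
    expect n (fun x => f x * ∑ S ∈ 𝒮, c S * parity n S x) = ∑ S ∈ 𝒮, c S * fhat f S := by
  have : ∀ x, f x * ∑ S ∈ 𝒮, c S * parity n S x
      = ∑ S ∈ 𝒮, c S * (f x * parity n S x) := by
    intro x; rw [Finset.mul_sum]; exact Finset.sum_congr rfl fun S _ => by ring
  rw [show (fun x => f x * ∑ S ∈ 𝒮, c S * parity n S x) = _ from funext this, expect_sum]
  exact Finset.sum_congr rfl fun S _ => by rw [expect_smul, fhat]

/-- Parseval for coefficient-form functions -/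
lemma expect_sq_coeffsum (𝒮 : Finset (Finset (Fin n))) (c : Finset (Fin n) → ℝ) :
    expect n (fun x => (∑ S ∈ 𝒮, c S * parity n S x) ^ 2) = ∑ S ∈ 𝒮, (c S) ^ 2 := by
  have expand : ∀ x, (∑ S ∈ 𝒮, c S * parity n S x) ^ 2
      = ∑ S ∈ 𝒮, ∑ T ∈ 𝒮, (c S * c T) * (parity n S x * parity n T x) := by
    intro x
    rw [sq, Finset.sum_mul_sum]
    exact Finset.sum_congr rfl fun S _ => Finset.sum_congr rfl fun T _ => by ring
  rw [show (fun x => (∑ S ∈ 𝒮, c S * parity n S x) ^ 2) = _ from funext expand, expect_sum]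
  have : ∀ S ∈ 𝒮, expect n (fun x => ∑ T ∈ 𝒮, (c S * c T) * (parity n S x * parity n T x))
      = (c S) ^ 2 := by
    intro S hS
    rw [expect_sum]
    rw [Finset.sum_eq_single S]
    · rw [expect_smul, expect_parity_mul, if_pos rfl, mul_one, sq]
    · intro T _ hT
      rw [expect_smul, expect_parity_mul, if_neg (fun h => hT h.symm), mul_zero]
    · intro h; exact absurd hS h
  exact Finset.sum_congr rfl this

/-! ### flip machinery -/

def flip (i : Fin n) (x : Fin n → Bool) : Fin n → Bool := Function.update x i (!(x i))

lemma flip_apply_self (i : Fin n) (x : Fin n → Bool) : flip i x i = !(x i) := by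
  simp [flip]

lemma flip_apply_ne (i j : Fin n) (x : Fin n → Bool) (h : j ≠ i) : flip i x j = x j := by
  simp [flip, Function.update_of_ne h]

lemma flip_flip (i : Fin n) (x : Fin n → Bool) : flip i (flip i x) = x := by
  funext j
  by_cases h : j = i
  · subst h; rw [flip_apply_self, flip_apply_self, Bool.not_not]
  · rw [flip_apply_ne _ _ _ h, flip_apply_ne _ _ _ h]

lemma sum_flip (i : Fin n) (F : (Fin n → Bool) → ℝ) :
    ∑ x : Fin n → Bool, F (flip i x) = ∑ x : Fin n → Bool, F x :=
  Fintype.sum_bijective (flip i) (Function.Involutive.bijective (flip_flip i)) _ _ (fun _ => rfl)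

lemma expect_flip (i : Fin n) (F : (Fin n → Bool) → ℝ) :
    expect n (fun x => F (flip i x)) = expect n F := by
  rw [expect, expect, sum_flip]

lemma ee_not (b : Bool) : ee (!b) = - ee b := by cases b <;> simp [ee]

lemma parity_flip (S : Finset (Fin n)) (i : Fin n) (x : Fin n → Bool) :
    parity n S (flip i x) = (if i ∈ S then -1 else 1) * parity n S x := by
  rw [parity_eq_prod, parity_eq_prod]
  by_cases hi : i ∈ S
  · rw [if_pos hi, ← Finset.mul_prod_erase S (fun j => ee (flip i x j)) hi,
      ← Finset.mul_prod_erase S (fun j => ee (x j)) hi]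
    rw [flip_apply_self, ee_not,
      Finset.prod_congr rfl (fun j hj => by
        rw [flip_apply_ne i j x (Finset.ne_of_mem_erase hj)])]
    ring
  · rw [if_neg hi, one_mul]
    exact Finset.prod_congr rfl (fun j hj => by
      rw [flip_apply_ne i j x (fun h => hi (h ▸ hj))])

lemma parity_insert (i : Fin n) (T : Finset (Fin n)) (x : Fin n → Bool) (h : i ∉ T) :
    parity n (insert i T) x = ee (x i) * parity n T x := by
  rw [parity_eq_prod, parity_eq_prod, Finset.prod_insert h]

lemma expect_odd (i : Fin n) (G : (Fin n → Bool) → ℝ) (hG : ∀ x, G (flip i x) = G x) :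
    expect n (fun x => ee (x i) * G x) = 0 := by
  have key : ∑ x : Fin n → Bool, ee (x i) * G x = - ∑ x : Fin n → Bool, ee (x i) * G x := by
    conv_lhs => rw [← sum_flip i (fun x => ee (x i) * G x)]
    rw [← Finset.sum_neg_distrib]
    apply Finset.sum_congr rfl
    intro x _
    rw [flip_apply_self, ee_not, hG x]
    ring
  have : ∑ x : Fin n → Bool, ee (x i) * G x = 0 := by linarith
  rw [expect, this, zero_div]

/-! ### splitting sums over subsets along a coordinate -/

lemma sum_split_insert (i : Fin n) (F : Finset (Fin n) → ℝ) :
    ∑ S : Finset (Fin n), F S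
      = (∑ S : Finset (Fin n), if i ∈ S then 0 else F S)
        + ∑ T : Finset (Fin n), (if i ∈ T then 0 else F (insert i T)) := by
  rw [← Finset.sum_filter_add_sum_filter_not Finset.univ (fun S => i ∈ S)]
  rw [add_comm]
  congr 1
  · rw [Finset.sum_filter]
    apply Finset.sum_congr rfl
    intro S _
    by_cases h : i ∈ S <;> simp [h]
  · rw [show (∑ T : Finset (Fin n), (if i ∈ T then 0 else F (insert i T)))
        = ∑ T ∈ Finset.univ.filter (fun T => ¬ i ∈ T), F (insert i T) by
      rw [Finset.sum_filter]
      exact Finset.sum_congr rfl fun T _ => by by_cases h : i ∈ T <;> simp [h]]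
    apply Finset.sum_nbij' (fun S => S.erase i) (fun T => insert i T)
    · intro S hS
      simp only [Finset.mem_filter, Finset.mem_univ, true_and] at hS ⊢
      exact Finset.notMem_erase i S
    · intro T hT
      simp
    · intro S hS
      simp only [Finset.mem_filter, Finset.mem_univ, true_and] at hS
      exact Finset.insert_erase hS
    · intro T hT
      simp only [Finset.mem_filter, Finset.mem_univ, true_and] at hT
      exact Finset.erase_insert hT
    · intro S hS
      simp only [Finset.mem_filter, Finset.mem_univ, true_and] at hS
      rw [Finset.insert_erase hS]

lemma coeff_split (i : Fin n) (w : Finset (Fin n) → ℝ) (x : Fin n → Bool) :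
    ∑ S : Finset (Fin n), w S * parity n S x
      = (∑ S : Finset (Fin n), (if i ∈ S then 0 else w S) * parity n S x)
        + ee (x i) * ∑ T : Finset (Fin n), (if i ∈ T then 0 else w (insert i T)) * parity n T x := by
  rw [sum_split_insert i (fun S => w S * parity n S x), Finset.mul_sum]
  congr 1
  · exact Finset.sum_congr rfl fun S _ => by by_cases h : i ∈ S <;> simp [h]
  · apply Finset.sum_congr rfl
    intro T _
    by_cases h : i ∈ T
    · simp [h]
    · rw [if_neg h, if_neg h, parity_insert i T x h]
      ring

lemma coeff_split_sq (i : Fin n) (w : Finset (Fin n) → ℝ) :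
    ∑ S : Finset (Fin n), (w S) ^ 2
      = (∑ S : Finset (Fin n), ((if i ∈ S then 0 else w S)) ^ 2)
        + ∑ T : Finset (Fin n), ((if i ∈ T then 0 else w (insert i T))) ^ 2 := by
  rw [sum_split_insert i (fun S => (w S) ^ 2)]
  congr 1
  · exact Finset.sum_congr rfl fun S _ => by by_cases h : i ∈ S <;> simp [h]
  · exact Finset.sum_congr rfl fun T _ => by by_cases h : i ∈ T <;> simp [h]

/-- Bonami (2,4)-hypercontractivity for low-degree polynomials. -/
lemma hyper (A : Finset (Fin n)) : ∀ (k : ℕ) (w : Finset (Fin n) → ℝ),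
    (∀ S, w S ≠ 0 → S ⊆ A ∧ S.card ≤ k) →
    expect n (fun x => (∑ S : Finset (Fin n), w S * parity n S x) ^ 4)
      ≤ 9 ^ k * (∑ S : Finset (Fin n), (w S) ^ 2) ^ 2 := by
  induction A using Finset.induction_on with
  | empty =>
    intro k w hw
    have hz : ∀ S, S ≠ ∅ → w S = 0 := by
      intro S hS
      by_contra h
      exact hS (Finset.subset_empty.1 (hw S h).1)
    have hpt : ∀ x, ∑ S : Finset (Fin n), w S * parity n S x = w ∅ := by
      intro x
      rw [Finset.sum_eq_single ∅]
      · simp [parity]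
      · intro S _ hS0; rw [hz S hS0, zero_mul]
      · intro h; exact absurd (Finset.mem_univ ∅) h
    have hsq : ∑ S : Finset (Fin n), (w S) ^ 2 = (w ∅) ^ 2 := by
      rw [Finset.sum_eq_single ∅]
      · intro S _ hS0; rw [hz S hS0]; ring
      · intro h; exact absurd (Finset.mem_univ ∅) h
    rw [show (fun x => (∑ S : Finset (Fin n), w S * parity n S x) ^ 4)
        = (fun _ => (w ∅) ^ 4) from funext fun x => by rw [hpt x], expect_const, hsq]
    have h9 : (1:ℝ) ≤ 9 ^ k := one_le_pow₀ (by norm_num : (1:ℝ) ≤ 9)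
    nlinarith [sq_nonneg ((w ∅) ^ 2), h9]
  | @insert i A hiA IH =>
    intro k w hw
    set w0 : Finset (Fin n) → ℝ := fun S => if i ∈ S then 0 else w S with hw0def
    set w1 : Finset (Fin n) → ℝ := fun T => if i ∈ T then 0 else w (insert i T) with hw1def
    set h0 : (Fin n → Bool) → ℝ := fun x => ∑ S : Finset (Fin n), w0 S * parity n S x with hh0
    set h1 : (Fin n → Bool) → ℝ := fun x => ∑ S : Finset (Fin n), w1 S * parity n S x with hh1
    set P0 : ℝ := ∑ S : Finset (Fin n), (w0 S) ^ 2 with hP0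
    set P1 : ℝ := ∑ S : Finset (Fin n), (w1 S) ^ 2 with hP1
    have hP0n : 0 ≤ P0 := Finset.sum_nonneg fun S _ => sq_nonneg _
    have hP1n : 0 ≤ P1 := Finset.sum_nonneg fun S _ => sq_nonneg _
    have hsplit : ∀ x, ∑ S : Finset (Fin n), w S * parity n S x = h0 x + ee (x i) * h1 x :=
      fun x => coeff_split i w x
    have hPsum : ∑ S : Finset (Fin n), (w S) ^ 2 = P0 + P1 := coeff_split_sq i w
    have hflip0 : ∀ x, h0 (flip i x) = h0 x := by
      intro x
      apply Finset.sum_congr rfl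
      intro S _
      by_cases h : i ∈ S
      · simp [hw0def, h]
      · rw [parity_flip, if_neg h, one_mul]
    have hflip1 : ∀ x, h1 (flip i x) = h1 x := by
      intro x
      apply Finset.sum_congr rfl
      intro S _
      by_cases h : i ∈ S
      · simp [hw1def, h]
      · rw [parity_flip, if_neg h, one_mul]
    have hw0s : ∀ S, w0 S ≠ 0 → S ⊆ A ∧ S.card ≤ k := by
      intro S hS
      by_cases h : i ∈ S
      · simp [hw0def, h] at hS
      · have := hw S (by simpa [hw0def, h] using hS)
        exact ⟨(Finset.subset_insert_iff_of_notMem h).1 this.1, this.2⟩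
    have hw1s : ∀ T, w1 T ≠ 0 → T ⊆ A ∧ T.card ≤ k - 1 := by
      intro T hT
      by_cases h : i ∈ T
      · simp [hw1def, h] at hT
      · have hT' : w (insert i T) ≠ 0 := by simpa [hw1def, h] using hT
        have := hw _ hT'
        constructor
        · intro j hj
          have hji : j ≠ i := fun he => h (he ▸ hj)
          have := this.1 (Finset.mem_insert_of_mem hj)
          rcases Finset.mem_insert.1 this with h' | h'
          · exact absurd h' hji
          · exact h'
        · have hc : (insert i T).card = T.card + 1 := Finset.card_insert_of_notMem h
          omega
    have IH0 : expect n (fun x => (h0 x) ^ 4) ≤ 9 ^ k * P0 ^ 2 := IH k w0 hw0s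
    have IH1 : expect n (fun x => (h1 x) ^ 4) ≤ 9 ^ (k - 1) * P1 ^ 2 := IH (k - 1) w1 hw1s
    set X : ℝ := expect n (fun x => (h0 x) ^ 2 * (h1 x) ^ 2) with hXdef
    have hXn : 0 ≤ X := expect_nonneg fun x => by positivity
    have hXsq : X ^ 2 ≤ expect n (fun x => (h0 x) ^ 4) * expect n (fun x => (h1 x) ^ 4) := by
      have := expect_cs (fun x => (h0 x) ^ 2) (fun x => (h1 x) ^ 2)
      calc X ^ 2 ≤ expect n (fun x => ((h0 x) ^ 2) ^ 2) * expect n (fun x => ((h1 x) ^ 2) ^ 2) :=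
            this
        _ = _ := by
            rw [show (fun x => ((h0 x) ^ 2) ^ 2) = (fun x => (h0 x) ^ 4) from
                funext fun x => by ring,
              show (fun x => ((h1 x) ^ 2) ^ 2) = (fun x => (h1 x) ^ 4) from
                funext fun x => by ring]
    have hEn0 : 0 ≤ expect n (fun x => (h0 x) ^ 4) := expect_nonneg fun x => by positivity
    have hEn1 : 0 ≤ expect n (fun x => (h1 x) ^ 4) := expect_nonneg fun x => by positivity
    set G : (Fin n → Bool) → ℝ := fun x => 4 * (h0 x) ^ 3 * h1 x + 4 * h0 x * (h1 x) ^ 3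
      with hGdef
    have hGflip : ∀ x, G (flip i x) = G x := by
      intro x; simp only [hGdef, hflip0 x, hflip1 x]
    have decomp : expect n (fun x => (∑ S : Finset (Fin n), w S * parity n S x) ^ 4)
        = expect n (fun x => (h0 x) ^ 4) + 6 * X + expect n (fun x => (h1 x) ^ 4) := by
      have key : ∀ x, (∑ S : Finset (Fin n), w S * parity n S x) ^ 4
          = ((h0 x) ^ 4 + 6 * ((h0 x) ^ 2 * (h1 x) ^ 2) + (h1 x) ^ 4) + ee (x i) * G x := by
        intro x
        rw [hsplit x]
        rcases ee_one_or (x i) with h | h <;> rw [h] <;> simp only [hGdef] <;> ring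
      rw [show (fun x => (∑ S : Finset (Fin n), w S * parity n S x) ^ 4)
          = (fun x => ((h0 x) ^ 4 + 6 * ((h0 x) ^ 2 * (h1 x) ^ 2) + (h1 x) ^ 4)
              + ee (x i) * G x) from funext key]
      rw [expect_add, expect_odd i G hGflip, add_zero, expect_add, expect_add, expect_smul]
    have h6X : 6 * X ≤ 2 * 9 ^ k * (P0 * P1) := by
      rcases Nat.eq_zero_or_pos k with hk | hk
      · subst hk
        have hw1z : ∀ T, w1 T = 0 := by
          intro T
          by_cases h : i ∈ T
          · simp [hw1def, h]
          · by_contra hne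
            have := (hw (insert i T) (by simpa [hw1def, h] using hne)).2
            rw [Finset.card_insert_of_notMem h] at this
            omega
        have hh1z : ∀ x, h1 x = 0 := by
          intro x
          apply Finset.sum_eq_zero
          intro S _
          rw [hw1z S, zero_mul]
        have hX0 : X = 0 := by
          rw [hXdef, show (fun x => (h0 x) ^ 2 * (h1 x) ^ 2) = (fun _ => (0:ℝ)) from
            funext fun x => by rw [hh1z x]; ring, expect_const]
        have hP10 : P1 = 0 := Finset.sum_eq_zero fun S _ => by rw [hw1z S]; ring
        rw [hX0, hP10]
        norm_num
      · obtain ⟨m, rfl⟩ : ∃ m, k = m + 1 := ⟨k - 1, (Nat.succ_pred_eq_of_pos hk).symm⟩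
        have hkm : m + 1 - 1 = m := rfl
        rw [hkm] at IH1
        have hB : X ^ 2 ≤ (3 ^ (m+1) * P0 * (3 ^ m * P1)) ^ 2 := by
          calc X ^ 2 ≤ expect n (fun x => (h0 x) ^ 4) * expect n (fun x => (h1 x) ^ 4) := hXsq
            _ ≤ (9 ^ (m+1) * P0 ^ 2) * (9 ^ m * P1 ^ 2) := by
                apply mul_le_mul IH0 IH1 hEn1 (by positivity)
            _ = (3 ^ (m+1) * P0 * (3 ^ m * P1)) ^ 2 := by
                have h93 : ∀ j : ℕ, (9:ℝ) ^ j = 3 ^ j * 3 ^ j := fun j => by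
                  rw [← mul_pow]; norm_num
                rw [h93 (m+1), h93 m]; ring
        have hBn : (0:ℝ) ≤ 3 ^ (m+1) * P0 * (3 ^ m * P1) := by positivity
        have hXB : X ≤ 3 ^ (m+1) * P0 * (3 ^ m * P1) := by nlinarith
        calc 6 * X ≤ 6 * (3 ^ (m+1) * P0 * (3 ^ m * P1)) := by linarith
          _ = 2 * 9 ^ (m+1) * (P0 * P1) := by
              have h93 : ∀ j : ℕ, (9:ℝ) ^ j = 3 ^ j * 3 ^ j := fun j => by
                rw [← mul_pow]; norm_num
              rw [h93 (m+1)]; ring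
    have h9le : (9:ℝ) ^ (k - 1) ≤ 9 ^ k :=
      pow_le_pow_right₀ (by norm_num : (1:ℝ) ≤ 9) (Nat.sub_le k 1)
    rw [decomp, hPsum]
    have hE1 : expect n (fun x => (h1 x) ^ 4) ≤ 9 ^ k * P1 ^ 2 :=
      IH1.trans (by apply mul_le_mul_of_nonneg_right h9le (sq_nonneg _))
    nlinarith [sq_nonneg (P0 + P1)]

lemma expect_neg (g : (Fin n → Bool) → ℝ) : expect n (fun x => -(g x)) = - expect n g := by
  rw [expect, expect, Finset.sum_neg_distrib, neg_div]

lemma parity_mul_single (S : Finset (Fin n)) (i : Fin n) (x : Fin n → Bool) (h : i ∈ S) :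
    parity n S x * parity n {i} x = parity n (S.erase i) x := by
  conv_lhs => rw [← Finset.insert_erase h, parity_insert i _ x (Finset.notMem_erase i S)]
  have hsing : parity n {i} x = ee (x i) := by
    rw [parity_eq_prod, Finset.prod_singleton]
  rw [hsing]
  linear_combination parity n (S.erase i) x * ee_mul_self (x i)

def Dp {n : ℕ} (f : (Fin n → Bool) → ℝ) (i : Fin n) (x : Fin n → Bool) : ℝ :=
  max (f x - f (flip i x)) 0

def beta {n : ℕ} (f : (Fin n → Bool) → ℝ) (i : Fin n) : ℝ := expect n (Dp f i)

lemma beta_nonneg (f : (Fin n → Bool) → ℝ) (i : Fin n) : 0 ≤ beta f i :=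
  expect_nonneg fun x => le_max_right _ _

def Dhalf {n : ℕ} (f : (Fin n → Bool) → ℝ) (i : Fin n) (x : Fin n → Bool) : ℝ :=
  (f x - f (flip i x)) / 2

lemma abs_Dhalf_eq (f : (Fin n → Bool) → ℝ) (i : Fin n) (x : Fin n → Bool) :
    |Dhalf f i x| = (Dp f i x + Dp f i (flip i x)) / 2 := by
  rw [Dhalf, Dp, Dp, flip_flip, abs_div]
  rw [show |(2:ℝ)| = 2 by norm_num]
  rcases le_total (f x) (f (flip i x)) with h | h
  · rw [abs_of_nonpos (by linarith), max_eq_right (by linarith), max_eq_left (by linarith)]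
    ring
  · rw [abs_of_nonneg (by linarith), max_eq_left (by linarith), max_eq_right (by linarith)]
    ring

lemma expect_abs_Dhalf (f : (Fin n → Bool) → ℝ) (i : Fin n) :
    expect n (fun x => |Dhalf f i x|) = beta f i := by
  rw [show (fun x => |Dhalf f i x|)
      = (fun x => (1/2) * Dp f i x + (1/2) * Dp f i (flip i x)) from funext fun x => by
        rw [abs_Dhalf_eq]; ring]
  rw [expect_add, expect_smul, expect_smul, expect_flip i (Dp f i)]
  rw [beta]
  ring

lemma abs_Dhalf_le (f : (Fin n → Bool) → ℝ) (hf01 : ∀ x, f x ∈ Set.Icc (0:ℝ) 1)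
    (i : Fin n) (x : Fin n → Bool) : |Dhalf f i x| ≤ 1 := by
  have h1 := hf01 x
  have h2 := hf01 (flip i x)
  simp only [Set.mem_Icc] at h1 h2
  rw [Dhalf, abs_le]
  constructor <;> [nlinarith [h1.1, h2.2]; nlinarith [h1.2, h2.1]]

/-- the degree-d influence cut via hypercontractivity -/
lemma influence_cut (f : (Fin n → Bool) → ℝ) (hf01 : ∀ x, f x ∈ Set.Icc (0:ℝ) 1)
    (d : ℕ) (i : Fin n) :
    ∑ S ∈ Finset.univ.filter (fun S : Finset (Fin n) => i ∈ S ∧ S.card ≤ d), (fhat f S) ^ 2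
      ≤ 3 ^ (d - 1) * beta f i * Real.sqrt (beta f i) := by
  classical
  set Ai := Finset.univ.filter (fun S : Finset (Fin n) => i ∈ S ∧ S.card ≤ d) with hAi
  set β : ℝ := beta f i with hβ
  have hβn : 0 ≤ β := beta_nonneg f i
  set m : ℝ := ∑ S ∈ Ai, (fhat f S) ^ 2 with hm
  have hmn : 0 ≤ m := Finset.sum_nonneg fun S _ => sq_nonneg _
  have hEfq : expect n (fun x => f x * ∑ S ∈ Ai, fhat f S * parity n S x) = m := by
    rw [expect_mul_coeffsum f Ai (fhat f), hm]
    exact Finset.sum_congr rfl fun S _ => by ring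
  have hq_odd : ∀ x, (∑ S ∈ Ai, fhat f S * parity n S (flip i x))
      = - ∑ S ∈ Ai, fhat f S * parity n S x := by
    intro x
    rw [← Finset.sum_neg_distrib]
    apply Finset.sum_congr rfl
    intro S hS
    have hiS : i ∈ S := ((Finset.mem_filter.1 hS).2).1
    rw [parity_flip, if_pos hiS]
    ring
  -- E[Df * q] = m
  have hEDfq : expect n (fun x => Dhalf f i x * ∑ S ∈ Ai, fhat f S * parity n S x) = m := by
    have e0 : expect n (fun x => f (flip i x) * ∑ S ∈ Ai, fhat f S * parity n S (flip i x))
        = m := by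
      rw [expect_flip i (fun x => f x * ∑ S ∈ Ai, fhat f S * parity n S x)]
      exact hEfq
    have e1 : expect n (fun x => f (flip i x) * ∑ S ∈ Ai, fhat f S * parity n S x) = - m := by
      calc expect n (fun x => f (flip i x) * ∑ S ∈ Ai, fhat f S * parity n S x)
          = expect n (fun x =>
              -(f (flip i x) * ∑ S ∈ Ai, fhat f S * parity n S (flip i x))) := by
            apply congrArg; funext x; rw [hq_odd x]; ring
        _ = - m := by rw [expect_neg, e0]
    rw [show (fun x => Dhalf f i x * ∑ S ∈ Ai, fhat f S * parity n S x)
        = (fun x => (1/2) * (f x * ∑ S ∈ Ai, fhat f S * parity n S x)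
            - (1/2) * (f (flip i x) * ∑ S ∈ Ai, fhat f S * parity n S x)) from
          funext fun x => by rw [Dhalf]; ring]
    rw [expect_sub, expect_smul, expect_smul, hEfq, e1]
    ring
  set Y : ℝ := expect n (fun x => |Dhalf f i x| * (∑ S ∈ Ai, fhat f S * parity n S x) ^ 2)
    with hY
  have hYn : 0 ≤ Y := expect_nonneg fun x => mul_nonneg (abs_nonneg _) (sq_nonneg _)
  have CS1 : m ^ 2 ≤ β * Y := by
    have step : m ≤ expect n (fun x => |Dhalf f i x| * |∑ S ∈ Ai, fhat f S * parity n S x|) := by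
      rw [← hEDfq]
      apply expect_mono
      intro x
      rw [← abs_mul]
      exact le_abs_self _
    have cs := expect_cs (fun x => Real.sqrt |Dhalf f i x|)
      (fun x => Real.sqrt |Dhalf f i x| * |∑ S ∈ Ai, fhat f S * parity n S x|)
    rw [show (fun x => Real.sqrt |Dhalf f i x|
          * (Real.sqrt |Dhalf f i x| * |∑ S ∈ Ai, fhat f S * parity n S x|))
        = (fun x => |Dhalf f i x| * |∑ S ∈ Ai, fhat f S * parity n S x|) from funext fun x => by
          rw [← mul_assoc, Real.mul_self_sqrt (abs_nonneg _)]] at cs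
    rw [show (fun x => (Real.sqrt |Dhalf f i x|) ^ 2) = (fun x => |Dhalf f i x|) from
        funext fun x => Real.sq_sqrt (abs_nonneg _)] at cs
    rw [show (fun x => (Real.sqrt |Dhalf f i x| * |∑ S ∈ Ai, fhat f S * parity n S x|) ^ 2)
        = (fun x => |Dhalf f i x| * (∑ S ∈ Ai, fhat f S * parity n S x) ^ 2) from
        funext fun x => by
          rw [mul_pow, Real.sq_sqrt (abs_nonneg _), sq_abs]] at cs
    rw [expect_abs_Dhalf] at cs
    calc m ^ 2
        ≤ (expect n (fun x => |Dhalf f i x| * |∑ S ∈ Ai, fhat f S * parity n S x|)) ^ 2 :=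
          pow_le_pow_left₀ hmn step 2
      _ ≤ β * Y := cs
  have hq4 : expect n (fun x => (∑ S ∈ Ai, fhat f S * parity n S x) ^ 4)
      ≤ 9 ^ (d - 1) * m ^ 2 := by
    set w : Finset (Fin n) → ℝ := fun T =>
      if i ∈ T then 0 else (if T.card + 1 ≤ d then fhat f (insert i T) else 0) with hwdef
    have hsupp : ∀ T, w T ≠ 0 → T ⊆ Finset.univ ∧ T.card ≤ d - 1 := by
      intro T hT
      refine ⟨Finset.subset_univ T, ?_⟩
      by_cases h1 : i ∈ T
      · simp [hwdef, h1] at hT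
      · by_cases h2 : T.card + 1 ≤ d
        · omega
        · simp [hwdef, h1, h2] at hT
          exact absurd hT.1 (by omega)
    set B := Finset.univ.filter (fun T : Finset (Fin n) => i ∉ T ∧ T.card + 1 ≤ d) with hB
    have hBAi : ∀ (F : Finset (Fin n) → ℝ),
        ∑ T ∈ B, F T = ∑ S ∈ Ai, F (S.erase i) := by
      intro F
      apply Finset.sum_nbij' (fun T => insert i T) (fun S => S.erase i)
      · intro T hT
        simp only [hB, Finset.mem_filter, Finset.mem_univ, true_and] at hT
        simp only [hAi, Finset.mem_filter, Finset.mem_univ, true_and]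
        exact ⟨Finset.mem_insert_self i T, by rw [Finset.card_insert_of_notMem hT.1]; omega⟩
      · intro S hS
        simp only [hAi, Finset.mem_filter, Finset.mem_univ, true_and] at hS
        simp only [hB, Finset.mem_filter, Finset.mem_univ, true_and]
        refine ⟨Finset.notMem_erase i S, ?_⟩
        rw [Finset.card_erase_of_mem hS.1]
        have := Finset.card_pos.2 ⟨i, hS.1⟩
        omega
      · intro T hT
        simp only [hB, Finset.mem_filter, Finset.mem_univ, true_and] at hT
        exact Finset.erase_insert hT.1
      · intro S hS
        simp only [hAi, Finset.mem_filter, Finset.mem_univ, true_and] at hS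
        exact Finset.insert_erase hS.1
      · intro T hT
        simp only [hB, Finset.mem_filter, Finset.mem_univ, true_and] at hT
        rw [Finset.erase_insert hT.1]
    have hwB : ∀ (G : Finset (Fin n) → ℝ),
        ∑ T : Finset (Fin n), w T * G T = ∑ T ∈ B, fhat f (insert i T) * G T := by
      intro G
      rw [hB, Finset.sum_filter]
      apply Finset.sum_congr rfl
      intro T _
      by_cases h1 : i ∈ T
      · simp [hwdef, h1]
      · by_cases h2 : T.card + 1 ≤ d
        · simp [hwdef, h1, h2]
          exact fun h => absurd h (by omega)
        · simp [hwdef, h1, h2]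
          exact fun h => absurd h (by omega)
    have hwsq : ∑ T : Finset (Fin n), (w T) ^ 2 = m := by
      have e1 : ∑ T : Finset (Fin n), (w T) ^ 2
          = ∑ T : Finset (Fin n), w T * w T := Finset.sum_congr rfl fun T _ => sq (w T)
      rw [e1, hwB w]
      have e2 : ∑ T ∈ B, fhat f (insert i T) * w T
          = ∑ T ∈ B, fhat f (insert i T) * fhat f (insert i T) := by
        apply Finset.sum_congr rfl
        intro T hT
        simp only [hB, Finset.mem_filter, Finset.mem_univ, true_and] at hT
        rw [hwdef]
        simp [hT.1, hT.2]
      rw [e2, hBAi (fun U => fhat f (insert i U) * fhat f (insert i U)), hm]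
      apply Finset.sum_congr rfl
      intro S hS
      simp only [hAi, Finset.mem_filter, Finset.mem_univ, true_and] at hS
      rw [Finset.insert_erase hS.1]
      ring
    have hpt : ∀ x, ∑ T : Finset (Fin n), w T * parity n T x
        = (∑ S ∈ Ai, fhat f S * parity n S x) * parity n {i} x := by
      intro x
      rw [hwB (fun T => parity n T x), hBAi (fun U => fhat f (insert i U) * parity n U x),
        Finset.sum_mul]
      apply Finset.sum_congr rfl
      intro S hS
      simp only [hAi, Finset.mem_filter, Finset.mem_univ, true_and] at hS
      rw [Finset.insert_erase hS.1, ← parity_mul_single S i x hS.1]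
      ring
    have hyp := hyper Finset.univ (d - 1) w hsupp
    rw [hwsq] at hyp
    calc expect n (fun x => (∑ S ∈ Ai, fhat f S * parity n S x) ^ 4)
        = expect n (fun x => (∑ T : Finset (Fin n), w T * parity n T x) ^ 4) := by
          apply congrArg
          funext x
          rw [hpt x]
          rcases parity_one_or {i} x with h | h <;> rw [h] <;> ring
      _ ≤ 9 ^ (d - 1) * m ^ 2 := hyp
  have CS2 : Y ^ 2 ≤ β * (9 ^ (d - 1) * m ^ 2) := by
    have cs := expect_cs (fun x => |Dhalf f i x|)
      (fun x => (∑ S ∈ Ai, fhat f S * parity n S x) ^ 2)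
    rw [show (fun x => |Dhalf f i x| ^ 2) = (fun x => (Dhalf f i x) ^ 2) from
        funext fun x => sq_abs _] at cs
    rw [show (fun x => ((∑ S ∈ Ai, fhat f S * parity n S x) ^ 2) ^ 2)
        = (fun x => (∑ S ∈ Ai, fhat f S * parity n S x) ^ 4) from
        funext fun x => by ring] at cs
    have hDfsq : expect n (fun x => (Dhalf f i x) ^ 2) ≤ β := by
      rw [hβ, ← expect_abs_Dhalf f i]
      apply expect_mono
      intro x
      have h1 := abs_Dhalf_le f hf01 i x
      nlinarith [abs_nonneg (Dhalf f i x), sq_abs (Dhalf f i x)]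
    calc Y ^ 2 ≤ expect n (fun x => (Dhalf f i x) ^ 2)
          * expect n (fun x => (∑ S ∈ Ai, fhat f S * parity n S x) ^ 4) := cs
      _ ≤ β * (9 ^ (d - 1) * m ^ 2) :=
          mul_le_mul hDfsq hq4 (expect_nonneg fun x => by
            rw [show (4:ℕ) = 2 * 2 from rfl, pow_mul]; exact sq_nonneg _) hβn
  rcases eq_or_lt_of_le hmn with hm0 | hm0
  · rw [← hm0]
    exact mul_nonneg (mul_nonneg (by positivity) hβn) (Real.sqrt_nonneg _)
  · set s := Real.sqrt β with hs
    have hsn : 0 ≤ s := Real.sqrt_nonneg β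
    have hs2 : s ^ 2 = β := Real.sq_sqrt hβn
    have hYB : Y ≤ s * 3 ^ (d - 1) * m := by
      have hB2 : (s * 3 ^ (d - 1) * m) ^ 2 = β * (9 ^ (d - 1) * m ^ 2) := by
        have h93 : (9:ℝ) ^ (d-1) = 3 ^ (d-1) * 3 ^ (d-1) := by
          rw [← mul_pow]; norm_num
        rw [h93, ← hs2]; ring
      nlinarith [CS2, hYn,
        mul_nonneg (mul_nonneg hsn (by positivity : (0:ℝ) ≤ 3 ^ (d-1))) hmn]
    have hc : m ^ 2 ≤ β * (s * 3 ^ (d - 1) * m) :=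
      CS1.trans (mul_le_mul_of_nonneg_left hYB hβn)
    have hfin : m * m ≤ (3 ^ (d-1) * β * s) * m := by nlinarith
    have := le_of_mul_le_mul_right hfin hm0
    linarith

/-! ### noise operator -/

def Nf {n : ℕ} (ρ : ℝ) (f : (Fin n → Bool) → ℝ) (A : Finset (Fin n)) (x : Fin n → Bool) : ℝ :=
  ∑ S : Finset (Fin n), ρ ^ (S ∩ A).card * fhat f S * parity n S x

lemma noise_base (ρ : ℝ) (f : (Fin n → Bool) → ℝ) (x : Fin n → Bool) :
    Nf ρ f ∅ x = f x := by
  rw [Nf, ← inversion f x]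
  apply Finset.sum_congr rfl
  intro S _
  rw [Finset.inter_empty, Finset.card_empty, pow_zero, one_mul]

lemma noise_step (ρ : ℝ) (f : (Fin n → Bool) → ℝ) (A : Finset (Fin n)) (i : Fin n)
    (hiA : i ∉ A) (x : Fin n → Bool) :
    Nf ρ f (insert i A) x
      = ((1 + ρ) / 2) * Nf ρ f A x + ((1 - ρ) / 2) * Nf ρ f A (flip i x) := by
  rw [Nf, Nf, Nf, Finset.mul_sum, Finset.mul_sum, ← Finset.sum_add_distrib]
  apply Finset.sum_congr rfl
  intro S _
  rw [parity_flip]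
  by_cases h : i ∈ S
  · have hins : S ∩ insert i A = insert i (S ∩ A) := by
      ext j
      simp only [Finset.mem_inter, Finset.mem_insert]
      constructor
      · rintro ⟨hjS, hj | hj⟩
        · exact Or.inl hj
        · exact Or.inr ⟨hjS, hj⟩
      · rintro (rfl | ⟨hjS, hjA⟩)
        · exact ⟨h, Or.inl rfl⟩
        · exact ⟨hjS, Or.inr hjA⟩
    have hnotmem : i ∉ S ∩ A := fun hc => hiA (Finset.mem_inter.1 hc).2
    rw [hins, Finset.card_insert_of_notMem hnotmem, if_pos h, pow_succ]
    ring
  · have hins : S ∩ insert i A = S ∩ A := by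
      ext j
      simp only [Finset.mem_inter, Finset.mem_insert]
      constructor
      · rintro ⟨hjS, hj | hj⟩
        · exact absurd (hj ▸ hjS) h
        · exact ⟨hjS, hj⟩
      · rintro ⟨hjS, hjA⟩
        exact ⟨hjS, Or.inr hjA⟩
    rw [hins, if_neg h]
    ring

lemma noise_contraction (ρ : ℝ) (hρ0 : 0 ≤ ρ) (hρ1 : ρ ≤ 1) (i : Fin n)
    (h : (Fin n → Bool) → ℝ) :
    expect n (fun x => |((1 + ρ) / 2) * h x + ((1 - ρ) / 2) * h (flip i x)|)
      ≤ expect n (fun x => |h x|) := by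
  have step : expect n (fun x => |((1 + ρ) / 2) * h x + ((1 - ρ) / 2) * h (flip i x)|)
      ≤ expect n (fun x => ((1 + ρ) / 2) * |h x| + ((1 - ρ) / 2) * |h (flip i x)|) := by
    apply expect_mono
    intro x
    calc |((1 + ρ) / 2) * h x + ((1 - ρ) / 2) * h (flip i x)|
        ≤ |((1 + ρ) / 2) * h x| + |((1 - ρ) / 2) * h (flip i x)| := abs_add_le _ _
      _ = ((1 + ρ) / 2) * |h x| + ((1 - ρ) / 2) * |h (flip i x)| := by
          rw [abs_mul, abs_mul, abs_of_nonneg (by linarith : (0:ℝ) ≤ (1 + ρ) / 2),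
            abs_of_nonneg (by linarith : (0:ℝ) ≤ (1 - ρ) / 2)]
  rw [expect_add, expect_smul, expect_smul, expect_flip i (fun x => |h x|)] at step
  linarith [step]

lemma noise_dist (ρ : ℝ) (hρ0 : 0 ≤ ρ) (hρ1 : ρ ≤ 1) (f : (Fin n → Bool) → ℝ)
    (A : Finset (Fin n)) :
    expect n (fun x => |Nf ρ f A x - f x|) ≤ ∑ i ∈ A, (1 - ρ) * beta f i := by
  induction A using Finset.induction_on with
  | empty =>
    rw [show (fun x => |Nf ρ f ∅ x - f x|) = (fun _ => (0:ℝ)) from funext fun x => by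
      rw [noise_base, sub_self, abs_zero], expect_const, Finset.sum_empty]
  | @insert i A hiA IH =>
    have key : ∀ x, Nf ρ f (insert i A) x - f x
        = (((1 + ρ) / 2) * (Nf ρ f A x - f x) + ((1 - ρ) / 2) * (Nf ρ f A (flip i x) - f (flip i x)))
          + (((1 - ρ) / 2) * (f (flip i x) - f x)) := by
      intro x
      rw [noise_step ρ f A i hiA x]
      ring
    have tri : expect n (fun x => |Nf ρ f (insert i A) x - f x|)
        ≤ expect n (fun x => |((1 + ρ) / 2) * (Nf ρ f A x - f x)
            + ((1 - ρ) / 2) * (Nf ρ f A (flip i x) - f (flip i x))|)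
          + expect n (fun x => |((1 - ρ) / 2) * (f (flip i x) - f x)|) := by
      rw [← expect_add]
      apply expect_mono
      intro x
      rw [key x]
      exact abs_add_le _ _
    have t1 : expect n (fun x => |((1 + ρ) / 2) * (Nf ρ f A x - f x)
        + ((1 - ρ) / 2) * (Nf ρ f A (flip i x) - f (flip i x))|)
        ≤ ∑ j ∈ A, (1 - ρ) * beta f j :=
      (noise_contraction ρ hρ0 hρ1 i (fun x => Nf ρ f A x - f x)).trans IH
    have t2 : expect n (fun x => |((1 - ρ) / 2) * (f (flip i x) - f x)|)
        = (1 - ρ) * beta f i := by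
      have e1 : ∀ x, |((1 - ρ) / 2) * (f (flip i x) - f x)| = (1 - ρ) * |Dhalf f i x| := by
        intro x
        rw [abs_mul, abs_of_nonneg (by linarith : (0:ℝ) ≤ (1 - ρ) / 2), Dhalf, abs_div,
          show |(2:ℝ)| = 2 by norm_num, abs_sub_comm]
        ring
      rw [show (fun x => |((1 - ρ) / 2) * (f (flip i x) - f x)|)
          = (fun x => (1 - ρ) * |Dhalf f i x|) from funext e1, expect_smul, expect_abs_Dhalf]
    rw [Finset.sum_insert hiA]
    linarith [tri, t1, t2]

/-! ### self-bounding consequences -/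

lemma min_update_eq (f : (Fin n → Bool) → ℝ) (i : Fin n) (x : Fin n → Bool) :
    f x - min (f (Function.update x i false)) (f (Function.update x i true)) = Dp f i x := by
  have hx : Function.update x i (x i) = x := Function.update_eq_self i x
  rcases Bool.eq_false_or_eq_true (x i) with hb | hb
  · have h1 : Function.update x i true = x := by
      conv_rhs => rw [← hx]
      rw [hb]
    have h2 : Function.update x i false = flip i x := by
      rw [flip, hb]
      norm_num
    rw [h1, h2, Dp, min_comm]
    rcases le_total (f x) (f (flip i x)) with h | h
    · rw [min_eq_left h, max_eq_right (by linarith), sub_self]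
    · rw [min_eq_right h, max_eq_left (by linarith)]
  · have h1 : Function.update x i false = x := by
      conv_rhs => rw [← hx]
      rw [hb]
    have h2 : Function.update x i true = flip i x := by
      rw [flip, hb]
      norm_num
    rw [h1, h2, Dp]
    rcases le_total (f x) (f (flip i x)) with h | h
    · rw [min_eq_left h, max_eq_right (by linarith), sub_self]
    · rw [min_eq_right h, max_eq_left (by linarith)]

lemma sum_beta_le (a : ℝ) (f : (Fin n → Bool) → ℝ) (hf : SelfBounding n a f) :
    ∑ i : Fin n, beta f i ≤ a * expect n f := by
  have key : ∀ x, ∑ i : Fin n, Dp f i x ≤ a * f x := by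
    intro x
    have := (hf x).2
    calc ∑ i : Fin n, Dp f i x
        = ∑ i : Fin n,
            (f x - min (f (Function.update x i false)) (f (Function.update x i true))) :=
          Finset.sum_congr rfl fun i _ => (min_update_eq f i x).symm
      _ ≤ a * f x := this
  calc ∑ i : Fin n, beta f i
      = expect n (fun x => ∑ i : Fin n, Dp f i x) := (expect_sum Finset.univ (Dp f)).symm
    _ ≤ expect n (fun x => a * f x) := expect_mono key
    _ = a * expect n f := expect_smul a f

lemma expect_f_le_one (f : (Fin n → Bool) → ℝ) (hf01 : ∀ x, f x ∈ Set.Icc (0:ℝ) 1) :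
    expect n f ≤ 1 := by
  have := expect_mono (fun x => (hf01 x).2)
  rwa [expect_const] at this

lemma expect_f_nonneg (f : (Fin n → Bool) → ℝ) (hf01 : ∀ x, f x ∈ Set.Icc (0:ℝ) 1) :
    0 ≤ expect n f := expect_nonneg fun x => (hf01 x).1

lemma abs_fhat_le_one (f : (Fin n → Bool) → ℝ) (hf01 : ∀ x, f x ∈ Set.Icc (0:ℝ) 1)
    (S : Finset (Fin n)) : |fhat f S| ≤ 1 := by
  calc |fhat f S| ≤ expect n (fun x => |f x * parity n S x|) := abs_expect_le _
    _ ≤ expect n (fun _ => (1:ℝ)) := by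
        apply expect_mono
        intro x
        rw [abs_mul, abs_parity, mul_one, abs_of_nonneg (hf01 x).1]
        exact (hf01 x).2
    _ = 1 := expect_const 1

lemma parseval_f (f : (Fin n → Bool) → ℝ) :
    ∑ S : Finset (Fin n), (fhat f S) ^ 2 = expect n (fun x => f x ^ 2) := by
  have := expect_sq_coeffsum Finset.univ (fhat f)
  rw [show (fun x => (∑ S ∈ Finset.univ, fhat f S * parity n S x) ^ 2)
      = (fun x => f x ^ 2) from funext fun x => by rw [inversion f x]] at this
  exact this.symm

/-! ### counting -/

lemma nat_sum_choose_le (j d : ℕ) :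
    ∑ k ∈ Finset.range (d + 1), j.choose k ≤ (j + 1) ^ d := by
  induction d with
  | zero => simp
  | succ d IH =>
    rw [Finset.sum_range_succ]
    have h1 : j.choose (d + 1) ≤ j ^ (d + 1) := Nat.choose_le_pow _ _
    have h2 : j ^ (d + 1) ≤ j * (j + 1) ^ d := by
      rw [pow_succ, mul_comm]
      exact Nat.mul_le_mul_left j (Nat.pow_le_pow_left (Nat.le_succ j) d)
    calc ∑ k ∈ Finset.range (d + 1), j.choose k + j.choose (d + 1)
        ≤ (j + 1) ^ d + j * (j + 1) ^ d := Nat.add_le_add IH (h1.trans h2)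
      _ = (j + 1) ^ (d + 1) := by ring

lemma count_le (J : Finset (Fin n)) (d : ℕ) :
    ((Finset.univ : Finset (Finset (Fin n))).filter
      (fun S => S.card ≤ d ∧ S ⊆ J)).card ≤ (J.card + 1) ^ d := by
  classical
  have hsub : (Finset.univ : Finset (Finset (Fin n))).filter (fun S => S.card ≤ d ∧ S ⊆ J)
      ⊆ (Finset.range (d + 1)).biUnion (fun k => J.powersetCard k) := by
    intro S hS
    simp only [Finset.mem_filter, Finset.mem_univ, true_and] at hS
    apply Finset.mem_biUnion.2
    exact ⟨S.card, Finset.mem_range.2 (by omega), Finset.mem_powersetCard.2 ⟨hS.2, rfl⟩⟩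
  calc ((Finset.univ : Finset (Finset (Fin n))).filter (fun S => S.card ≤ d ∧ S ⊆ J)).card
      ≤ ((Finset.range (d + 1)).biUnion (fun k => J.powersetCard k)).card :=
        Finset.card_le_card hsub
    _ ≤ ∑ k ∈ Finset.range (d + 1), (J.powersetCard k).card := Finset.card_biUnion_le
    _ = ∑ k ∈ Finset.range (d + 1), J.card.choose k := by
        apply Finset.sum_congr rfl
        intro k _
        rw [Finset.card_powersetCard]
    _ ≤ (J.card + 1) ^ d := nat_sum_choose_le J.card d

lemma sum_biUnion_le_sum_sum {ι : Type*} [DecidableEq ι] {κ : Type*} [DecidableEq κ]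
    (s : Finset ι) (t : ι → Finset κ) (g : κ → ℝ) (hg : ∀ k, 0 ≤ g k) :
    ∑ k ∈ s.biUnion t, g k ≤ ∑ i ∈ s, ∑ k ∈ t i, g k := by
  induction s using Finset.induction_on with
  | empty => simp
  | @insert i s his IH =>
    rw [Finset.biUnion_insert, Finset.sum_insert his]
    have := Finset.sum_union_inter (s₁ := t i) (s₂ := s.biUnion t) (f := g)
    have hint : 0 ≤ ∑ k ∈ (t i) ∩ (s.biUnion t), g k :=
      Finset.sum_nonneg fun k _ => hg k
    linarith [IH]

lemma sqrt_add_le (x y : ℝ) (hx : 0 ≤ x) (hy : 0 ≤ y) :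
    Real.sqrt (x + y) ≤ Real.sqrt x + Real.sqrt y := by
  have hx2 := Real.sq_sqrt hx
  have hy2 := Real.sq_sqrt hy
  have h : x + y ≤ (Real.sqrt x + Real.sqrt y) ^ 2 := by
    nlinarith [Real.sqrt_nonneg x, Real.sqrt_nonneg y]
  calc Real.sqrt (x + y) ≤ Real.sqrt ((Real.sqrt x + Real.sqrt y) ^ 2) := Real.sqrt_le_sqrt h
    _ = _ := Real.sqrt_sq (by positivity)

end SB

open SB

theorem selfbounding_low_spectral_norm_approx (n : ℕ) (a : ℝ) (ha : 1 ≤ a)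
    (hn : 4 * a ≤ (n : ℝ))
    (f : (Fin n → Bool) → ℝ) (hf01 : ∀ x, f x ∈ Set.Icc (0 : ℝ) 1) (hf : SelfBounding n a f)
    (ε : ℝ) (hε : ε ∈ Set.Ioc (0 : ℝ) 1)
    (d : ℕ) (hd : d = ⌈(4 * a / ε) * Real.log (6 / ε)⌉₊)
    (α : ℝ) (hα : α = (3 : ℝ) ^ (-(2 * (d : ℝ)) - 1) * ε ^ 4 / a ^ 2) :
    ∃ c : Finset (Fin n) → ℝ,
      (∀ S : Finset (Fin n), d < S.card → c S = 0) ∧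
      expect n (fun x => |f x - ∑ S : Finset (Fin n), c S * parity n S x|) ≤ ε ∧
      (∑ S : Finset (Fin n), |c S|) ≤ (1 + a / α) ^ d := by
  classical
  obtain ⟨hε0, hε1⟩ := hε
  have ha0 : (0:ℝ) < a := lt_of_lt_of_le one_pos ha
  have hlog : 0 < Real.log (6 / ε) := Real.log_pos (by rw [lt_div_iff₀ hε0]; linarith)
  have hd1 : 1 ≤ d := by
    rw [hd]
    have : (0:ℝ) < (4 * a / ε) * Real.log (6 / ε) := by positivity
    exact Nat.one_le_iff_ne_zero.2 (by
      intro h0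
      have := Nat.ceil_pos.2 this
      omega)
  have hd_ge : ((4 * a / ε) * Real.log (6 / ε)) ≤ (d : ℝ) := hd ▸ Nat.le_ceil _
  have hα0 : 0 < α := by rw [hα]; positivity
  set δ := ε / (4 * a) with hδ
  have hδ0 : 0 < δ := by rw [hδ]; positivity
  have hδ4 : δ ≤ 1/4 := by
    rw [hδ, div_le_iff₀ (by positivity)]
    nlinarith
  set ρ := 1 - δ with hρ
  have hρ0 : 0 ≤ ρ := by rw [hρ]; linarith
  have hρ1 : ρ ≤ 1 := by rw [hρ]; linarith
  set J := Finset.univ.filter (fun i : Fin n => α ≤ beta f i) with hJ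
  set c : Finset (Fin n) → ℝ := fun S =>
    if S.card ≤ d ∧ S ⊆ J then ρ ^ S.card * fhat f S else 0 with hc
  have hsumβ : ∑ i : Fin n, beta f i ≤ a := by
    calc ∑ i : Fin n, beta f i ≤ a * expect n f := sum_beta_le a f hf
      _ ≤ a * 1 := mul_le_mul_of_nonneg_left (expect_f_le_one f hf01) ha0.le
      _ = a := mul_one a
  refine ⟨c, ?_, ?_, ?_⟩
  · intro S hS
    rw [hc]
    exact if_neg (fun hcon => absurd hcon.1 (by omega))
  · -- main approximation bound
    have hA : expect n (fun x => |f x - Nf ρ f Finset.univ x|) ≤ ε / 4 := by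
      rw [show (fun x => |f x - Nf ρ f Finset.univ x|)
          = (fun x => |Nf ρ f Finset.univ x - f x|) from funext fun x => abs_sub_comm _ _]
      refine (noise_dist ρ hρ0 hρ1 f Finset.univ).trans ?_
      rw [← Finset.mul_sum]
      have h1 : (1 - ρ) = δ := by rw [hρ]; ring
      rw [h1]
      calc δ * ∑ i : Fin n, beta f i ≤ δ * a :=
            mul_le_mul_of_nonneg_left hsumβ hδ0.le
        _ = ε / 4 := by rw [hδ]; field_simp
    set bad := Finset.univ.filter
      (fun S : Finset (Fin n) => ¬(S.card ≤ d ∧ S ⊆ J)) with hbad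
    have hdiff : ∀ x, Nf ρ f Finset.univ x - (∑ S : Finset (Fin n), c S * parity n S x)
        = ∑ S ∈ bad, (ρ ^ S.card * fhat f S) * parity n S x := by
      intro x
      rw [Nf, ← Finset.sum_sub_distrib, hbad, Finset.sum_filter]
      apply Finset.sum_congr rfl
      intro S _
      rw [Finset.inter_univ]
      simp only [hc]
      by_cases h : S.card ≤ d ∧ S ⊆ J
      · rw [if_pos h, if_neg (not_not_intro h)]
        ring
      · rw [if_neg h, if_pos h]
        ring
    have hBsq : expect n
        (fun x => (Nf ρ f Finset.univ x - ∑ S : Finset (Fin n), c S * parity n S x) ^ 2)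
        = ∑ S ∈ bad, (ρ ^ S.card * fhat f S) ^ 2 := by
      rw [show (fun x => (Nf ρ f Finset.univ x - ∑ S : Finset (Fin n), c S * parity n S x) ^ 2)
          = (fun x => (∑ S ∈ bad, (ρ ^ S.card * fhat f S) * parity n S x) ^ 2) from
          funext fun x => by rw [hdiff x]]
      exact expect_sq_coeffsum bad _
    set bad1 := Finset.univ.filter (fun S : Finset (Fin n) => d < S.card) with hbad1
    set bad2 := Finset.univ.filter
      (fun S : Finset (Fin n) => S.card ≤ d ∧ ¬ S ⊆ J) with hbad2
    have hbadsplit : bad = bad1 ∪ bad2 := by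
      ext S
      simp only [hbad, hbad1, hbad2, Finset.mem_union, Finset.mem_filter, Finset.mem_univ,
        true_and]
      by_cases h1 : S.card ≤ d <;> by_cases h2 : S ⊆ J <;> simp [h1, h2] <;> omega
    have hdisj : Disjoint bad1 bad2 := by
      rw [Finset.disjoint_left]
      intro S h1 h2
      simp only [hbad1, Finset.mem_filter, Finset.mem_univ, true_and] at h1
      simp only [hbad2, Finset.mem_filter, Finset.mem_univ, true_and] at h2
      omega
    have hEf2 : expect n (fun x => f x ^ 2) ≤ 1 := by
      have hh : ∀ x : Fin n → Bool, f x ^ 2 ≤ (1:ℝ) := fun x => by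
        nlinarith [(hf01 x).1, (hf01 x).2]
      have := expect_mono (h := fun _ => (1:ℝ)) hh
      rwa [expect_const] at this
    have hball : ∑ S : Finset (Fin n), (fhat f S) ^ 2 ≤ 1 := by
      rw [parseval_f]; exact hEf2
    have hb1 : ∑ S ∈ bad1, (ρ ^ S.card * fhat f S) ^ 2 ≤ ρ ^ (2 * d) := by
      calc ∑ S ∈ bad1, (ρ ^ S.card * fhat f S) ^ 2
          ≤ ∑ S ∈ bad1, ρ ^ (2 * d) * (fhat f S) ^ 2 := by
            apply Finset.sum_le_sum
            intro S hS
            simp only [hbad1, Finset.mem_filter, Finset.mem_univ, true_and] at hS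
            have e1 : (ρ ^ S.card * fhat f S) ^ 2 = ρ ^ (2 * S.card) * (fhat f S) ^ 2 := by
              rw [mul_pow, ← pow_mul]
              ring_nf
            rw [e1]
            apply mul_le_mul_of_nonneg_right _ (sq_nonneg _)
            exact pow_le_pow_of_le_one hρ0 hρ1 (by omega)
        _ = ρ ^ (2 * d) * ∑ S ∈ bad1, (fhat f S) ^ 2 := by rw [Finset.mul_sum]
        _ ≤ ρ ^ (2 * d) * 1 := by
            apply mul_le_mul_of_nonneg_left _ (pow_nonneg hρ0 _)
            refine le_trans ?_ hball
            exact Finset.sum_le_sum_of_subset_of_nonneg (Finset.subset_univ _)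
              (fun S _ _ => sq_nonneg _)
        _ = ρ ^ (2 * d) := mul_one _
    have hb2 : ∑ S ∈ bad2, (ρ ^ S.card * fhat f S) ^ 2
        ≤ 3 ^ (d - 1) * Real.sqrt α * a := by
      have step1 : ∑ S ∈ bad2, (ρ ^ S.card * fhat f S) ^ 2
          ≤ ∑ S ∈ bad2, (fhat f S) ^ 2 := by
        apply Finset.sum_le_sum
        intro S _
        have h1 : (ρ ^ S.card) ^ 2 ≤ 1 := by
          apply pow_le_one₀ (pow_nonneg hρ0 _) (pow_le_one₀ hρ0 hρ1)
        nlinarith [sq_nonneg (fhat f S), sq_nonneg (ρ ^ S.card)]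
      have step2 : bad2 ⊆ (Jᶜ).biUnion
          (fun i => Finset.univ.filter (fun S : Finset (Fin n) => i ∈ S ∧ S.card ≤ d)) := by
        intro S hS
        simp only [hbad2, Finset.mem_filter, Finset.mem_univ, true_and] at hS
        obtain ⟨i, hiS, hiJ⟩ := Finset.not_subset.1 hS.2
        apply Finset.mem_biUnion.2
        exact ⟨i, by simp [Finset.mem_compl, hiJ],
          by simp only [Finset.mem_filter, Finset.mem_univ, true_and]; exact ⟨hiS, hS.1⟩⟩
      have step3 : ∑ S ∈ bad2, (fhat f S) ^ 2
          ≤ ∑ i ∈ Jᶜ, ∑ S ∈ Finset.univ.filter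
              (fun S : Finset (Fin n) => i ∈ S ∧ S.card ≤ d), (fhat f S) ^ 2 := by
        refine le_trans (Finset.sum_le_sum_of_subset_of_nonneg step2
          (fun S _ _ => sq_nonneg _)) ?_
        exact sum_biUnion_le_sum_sum _ _ _ (fun S => sq_nonneg _)
      have step4 : ∀ i ∈ Jᶜ, ∑ S ∈ Finset.univ.filter
          (fun S : Finset (Fin n) => i ∈ S ∧ S.card ≤ d), (fhat f S) ^ 2
          ≤ 3 ^ (d - 1) * Real.sqrt α * beta f i := by
        intro i hi
        have hβα : beta f i ≤ α := by
          simp only [hJ, Finset.mem_compl, Finset.mem_filter, Finset.mem_univ, true_and] at hi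
          linarith [lt_of_not_ge hi]
        refine (influence_cut f hf01 d i).trans ?_
        have hsq : Real.sqrt (beta f i) ≤ Real.sqrt α := Real.sqrt_le_sqrt hβα
        have h3 : (0:ℝ) ≤ 3 ^ (d-1) := by positivity
        calc (3:ℝ) ^ (d - 1) * beta f i * Real.sqrt (beta f i)
            ≤ 3 ^ (d - 1) * beta f i * Real.sqrt α := by
              apply mul_le_mul_of_nonneg_left hsq
              exact mul_nonneg h3 (beta_nonneg f i)
          _ = 3 ^ (d - 1) * Real.sqrt α * beta f i := by ring
      calc ∑ S ∈ bad2, (ρ ^ S.card * fhat f S) ^ 2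
          ≤ ∑ S ∈ bad2, (fhat f S) ^ 2 := step1
        _ ≤ ∑ i ∈ Jᶜ, ∑ S ∈ Finset.univ.filter
              (fun S : Finset (Fin n) => i ∈ S ∧ S.card ≤ d), (fhat f S) ^ 2 := step3
        _ ≤ ∑ i ∈ Jᶜ, 3 ^ (d - 1) * Real.sqrt α * beta f i := Finset.sum_le_sum step4
        _ = 3 ^ (d - 1) * Real.sqrt α * ∑ i ∈ Jᶜ, beta f i := by rw [← Finset.mul_sum]
        _ ≤ 3 ^ (d - 1) * Real.sqrt α * a := by
            apply mul_le_mul_of_nonneg_left _ (by positivity)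
            refine le_trans ?_ hsumβ
            exact Finset.sum_le_sum_of_subset_of_nonneg (Finset.subset_univ _)
              (fun i _ _ => beta_nonneg f i)
    have hB : expect n
        (fun x => |Nf ρ f Finset.univ x - ∑ S : Finset (Fin n), c S * parity n S x|)
        ≤ ρ ^ d + Real.sqrt (3 ^ (d - 1) * Real.sqrt α * a) := by
      have hs0n : (0:ℝ) ≤ 3 ^ (d - 1) * Real.sqrt α * a := by positivity
      refine le_trans (expect_abs_le_sqrt _) ?_
      have st1 : Real.sqrt (expect n (fun x =>
          (Nf ρ f Finset.univ x - ∑ S : Finset (Fin n), c S * parity n S x) ^ 2))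
          ≤ Real.sqrt (ρ ^ (2 * d) + 3 ^ (d - 1) * Real.sqrt α * a) := by
        apply Real.sqrt_le_sqrt
        rw [hBsq, hbadsplit, Finset.sum_union hdisj]
        exact add_le_add hb1 hb2
      have st2 : Real.sqrt (ρ ^ (2 * d) + 3 ^ (d - 1) * Real.sqrt α * a)
          ≤ Real.sqrt (ρ ^ (2 * d)) + Real.sqrt (3 ^ (d - 1) * Real.sqrt α * a) :=
        sqrt_add_le _ _ (pow_nonneg hρ0 _) hs0n
      have st3 : Real.sqrt (ρ ^ (2 * d)) = ρ ^ d := by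
        rw [show 2 * d = d * 2 from by ring, pow_mul, Real.sqrt_sq (pow_nonneg hρ0 d)]
      rw [st3] at st2
      exact st1.trans st2
    have hρd : ρ ^ d ≤ ε / 6 := by
      have h1 : ρ ≤ Real.exp (-δ) := by
        have := Real.add_one_le_exp (-δ)
        rw [hρ]
        linarith
      have h2 : ρ ^ d ≤ Real.exp (-δ) ^ d := pow_le_pow_left₀ hρ0 h1 d
      have h3 : Real.exp (-δ) ^ d = Real.exp ((d:ℝ) * (-δ)) := by
        rw [← Real.exp_nat_mul]
      have hdd : Real.log (6/ε) ≤ (d:ℝ) * δ := by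
        have e1 : Real.log (6/ε) = ((4 * a / ε) * Real.log (6 / ε)) * δ := by
          rw [hδ]
          field_simp
        rw [e1]
        exact mul_le_mul_of_nonneg_right hd_ge hδ0.le
      have hloginv : Real.log (ε/6) = - Real.log (6/ε) := by
        rw [← Real.log_inv, inv_div]
      have h4 : (d:ℝ) * (-δ) ≤ Real.log (ε/6) := by
        rw [hloginv]
        nlinarith
      calc ρ ^ d ≤ Real.exp ((d:ℝ) * (-δ)) := by rw [← h3]; exact h2
        _ ≤ Real.exp (Real.log (ε/6)) := Real.exp_le_exp.2 h4
        _ = ε / 6 := Real.exp_log (by positivity)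
    have hs0 : Real.sqrt (3 ^ (d - 1) * Real.sqrt α * a) ≤ (7/12) * ε := by
      have hs0n : (0:ℝ) ≤ 3 ^ (d - 1) * Real.sqrt α * a := by positivity
      have hsqsq : (3 ^ (d - 1) * Real.sqrt α * a) ^ 2 = ε ^ 4 / 27 := by
        have e1 : (3 ^ (d - 1) * Real.sqrt α * a) ^ 2
            = (3:ℝ) ^ (2 * (d - 1)) * (α * a ^ 2) := by
          rw [mul_pow, mul_pow, Real.sq_sqrt hα0.le, ← pow_mul]
          ring
        have e2 : α * a ^ 2 = (3 : ℝ) ^ (-(2 * (d : ℝ)) - 1) * ε ^ 4 := by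
          rw [hα]
          field_simp
        have e3 : (3:ℝ) ^ (2 * (d - 1)) * (3 : ℝ) ^ (-(2 * (d : ℝ)) - 1)
            = (3:ℝ) ^ (-(3:ℝ)) := by
          rw [show ((3:ℝ) ^ (2 * (d - 1)) : ℝ) = (3:ℝ) ^ ((2 * (d - 1) : ℕ) : ℝ) from
            (Real.rpow_natCast 3 (2 * (d - 1))).symm, ← Real.rpow_add (by norm_num : (0:ℝ) < 3)]
          congr 1
          have : ((2 * (d - 1) : ℕ) : ℝ) = 2 * (d : ℝ) - 2 := by
            push_cast [Nat.cast_sub hd1]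
            ring
          rw [this]
          ring
        have e4 : (3:ℝ) ^ (-(3:ℝ)) = 1 / 27 := by
          rw [Real.rpow_neg (by norm_num : (0:ℝ) ≤ 3),
            show ((3:ℝ) ^ ((3:ℝ)) : ℝ) = 27 from by
              rw [show ((3:ℝ):ℝ) = ((3:ℕ):ℝ) from by norm_num, Real.rpow_natCast]
              norm_num]
          norm_num
        rw [e1, e2, ← mul_assoc, e3, e4]
        ring
      have hb : 3 ^ (d - 1) * Real.sqrt α * a ≤ (49/144) * ε ^ 2 := by
        nlinarith [hs0n, sq_nonneg ε, sq_nonneg (ε^2), hε0.le, hε1]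
      calc Real.sqrt (3 ^ (d - 1) * Real.sqrt α * a)
          ≤ Real.sqrt ((49/144) * ε ^ 2) := Real.sqrt_le_sqrt hb
        _ = (7/12) * ε := by
            rw [show (49/144) * ε ^ 2 = ((7/12) * ε) ^ 2 from by ring,
              Real.sqrt_sq (by positivity)]
    calc expect n (fun x => |f x - ∑ S : Finset (Fin n), c S * parity n S x|)
        ≤ expect n (fun x => |f x - Nf ρ f Finset.univ x|
            + |Nf ρ f Finset.univ x - ∑ S : Finset (Fin n), c S * parity n S x|) := by
          apply expect_mono
          intro x
          exact abs_sub_le _ _ _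
      _ = expect n (fun x => |f x - Nf ρ f Finset.univ x|)
          + expect n (fun x =>
              |Nf ρ f Finset.univ x - ∑ S : Finset (Fin n), c S * parity n S x|) :=
          expect_add _ _
      _ ≤ ε / 4 + (ρ ^ d + Real.sqrt (3 ^ (d - 1) * Real.sqrt α * a)) := add_le_add hA hB
      _ ≤ ε / 4 + (ε / 6 + (7/12) * ε) := by linarith [hρd, hs0]
      _ ≤ ε := by linarith
  · -- spectral norm bound
    have hbound : ∀ S : Finset (Fin n), |c S| ≤ if S.card ≤ d ∧ S ⊆ J then (1:ℝ) else 0 := by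
      intro S
      simp only [hc]
      by_cases h : S.card ≤ d ∧ S ⊆ J
      · rw [if_pos h, if_pos h, abs_mul]
        have h1 : |ρ ^ S.card| ≤ 1 := by
          rw [abs_of_nonneg (pow_nonneg hρ0 _)]
          exact pow_le_one₀ hρ0 hρ1
        have h2 := abs_fhat_le_one f hf01 S
        nlinarith [abs_nonneg (fhat f S), abs_nonneg (ρ ^ S.card)]
      · rw [if_neg h, if_neg h, abs_zero]
    have hJa : (J.card : ℝ) ≤ a / α := by
      have h1 : (J.card : ℝ) * α ≤ ∑ i ∈ J, beta f i := by
        have h := Finset.sum_le_sum (s := J) (f := fun _ : Fin n => α)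
          (g := fun i => beta f i) ?_
        · rwa [Finset.sum_const, nsmul_eq_mul] at h
        · intro i hi
          rw [hJ] at hi
          exact (Finset.mem_filter.1 hi).2
      have h2 : ∑ i ∈ J, beta f i ≤ ∑ i : Fin n, beta f i :=
        Finset.sum_le_sum_of_subset_of_nonneg (Finset.subset_univ _)
          (fun i _ _ => beta_nonneg f i)
      rw [le_div_iff₀ hα0]
      linarith
    calc ∑ S : Finset (Fin n), |c S|
        ≤ ∑ S : Finset (Fin n), (if S.card ≤ d ∧ S ⊆ J then (1:ℝ) else 0) :=
          Finset.sum_le_sum fun S _ => hbound S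
      _ = ((Finset.univ.filter (fun S : Finset (Fin n) => S.card ≤ d ∧ S ⊆ J)).card : ℝ) := by
          rw [Finset.sum_boole]
      _ ≤ (((J.card + 1) ^ d : ℕ) : ℝ) := by
          exact_mod_cast count_le J d
      _ ≤ (1 + a / α) ^ d := by
          have hcast : (((J.card + 1) ^ d : ℕ) : ℝ) = ((J.card : ℝ) + 1) ^ d := by
            push_cast
            ring
          rw [hcast]
          apply pow_le_pow_left₀ (by positivity)
          linarith
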